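/- Let n ≥ 2 be an integer, let p ∈ (−1,0), and let k ∈ {1, 2, …, n−1}. For the function f(x) = x^p on (0,∞), one has (−1)^{n+k}·(x^k f'(x))^{(n−1)} ≤ 0 for all x > 0; explicitly, (−1)^{n+k}·p·(k+p−1)(k+p−2)⋯(k+p−(n−1))·x^{k+p−n} ≤ 0 for all x > 0. -/

import Mathlib

open Real Filter

lemma iter_rpow_aux (m : ℕ) : ∀ (c q : ℝ) (x : ℝ), 0 < x →
    iteratedDeriv m (fun y : ℝ => c * y ^ q) x
      = (c * ∏ i ∈ Finset.range m, (q - (i : ℝ))) * x ^ (q - (m : ℝ)) := by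
  induction m with
  | zero => intro c q x hx; simp
  | succ m ih =>
    intro c q x hx
    rw [iteratedDeriv_succ']
    have hev : deriv (fun y : ℝ => c * y ^ q) =ᶠ[nhds x]
        (fun y : ℝ => (c * q) * y ^ (q - 1)) := by
      filter_upwards [eventually_gt_nhds hx] with y hy
      have := ((Real.hasDerivAt_rpow_const (p := q) (Or.inl hy.ne'))).const_mul c
      rw [this.deriv]; ring
    rw [hev.iteratedDeriv_eq, ih (c * q) (q - 1) x hx, Finset.prod_range_succ']
    have h1 : (∏ i ∈ Finset.range m, (q - 1 - (i : ℝ)))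
        = ∏ i ∈ Finset.range m, (q - ((i : ℝ) + 1)) :=
      Finset.prod_congr rfl fun i _ => by ring
    have h2 : q - 1 - (m : ℝ) = q - ((m : ℕ) + 1 : ℕ) := by push_cast; ring
    rw [h1, h2]
    push_cast
    ring

theorem rpow_differential_inequality_neg_exponent
    (n : ℕ) (hn : 2 ≤ n) (p : ℝ) (hp : p ∈ Set.Ioo (-1 : ℝ) 0)
    (k : ℕ) (hk : k ∈ Finset.Icc 1 (n - 1)) :
    ∀ x : ℝ, 0 < x →
      (-1 : ℝ) ^ (n + k) *
        iteratedDeriv (n - 1)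
          (fun y : ℝ => y ^ k * deriv (fun z : ℝ => z ^ p) y) x ≤ 0 ∧
      (-1 : ℝ) ^ (n + k) * p *
        (∏ j ∈ Finset.Icc 1 (n - 1), ((k : ℝ) + p - (j : ℝ))) *
        x ^ ((k : ℝ) + p - (n : ℝ)) ≤ 0 := by
  obtain ⟨hp1, hp0⟩ := hp
  rw [Finset.mem_Icc] at hk
  obtain ⟨hk1, hk2⟩ := hk
  intro x hx
  set P := ∏ j ∈ Finset.Icc 1 (n - 1), ((k : ℝ) + p - (j : ℝ)) with hP
  -- split the product
  have hsplit : P = (∏ j ∈ Finset.Ioc 0 (k - 1), ((k : ℝ) + p - (j : ℝ))) *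
      ∏ j ∈ Finset.Ioc (k - 1) (n - 1), ((k : ℝ) + p - (j : ℝ)) := by
    have e1 : Finset.Icc 1 (n - 1) = Finset.Ioc 0 (n - 1) := Finset.Icc_add_one_left_eq_Ioc 0 (n - 1)
    rw [hP, e1]
    exact (Finset.prod_Ioc_consecutive _ (Nat.zero_le _) (by omega)).symm
  have hA : 0 ≤ ∏ j ∈ Finset.Ioc 0 (k - 1), ((k : ℝ) + p - (j : ℝ)) := by
    refine Finset.prod_nonneg fun j hj => ?_
    rw [Finset.mem_Ioc] at hj
    have hj' : (j : ℝ) ≤ (k : ℝ) - 1 := by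
      have h1 : (j : ℝ) ≤ ((k - 1 : ℕ) : ℝ) := by exact_mod_cast hj.2
      rwa [Nat.cast_sub hk1, Nat.cast_one] at h1
    linarith
  have hBC : ∏ j ∈ Finset.Ioc (k - 1) (n - 1), ((k : ℝ) + p - (j : ℝ))
      = (-1 : ℝ) ^ (n - k) *
        ∏ j ∈ Finset.Ioc (k - 1) (n - 1), ((j : ℝ) - (k : ℝ) - p) := by
    have : ∀ j ∈ Finset.Ioc (k - 1) (n - 1),
        ((k : ℝ) + p - (j : ℝ)) = (-1) * ((j : ℝ) - (k : ℝ) - p) := fun j _ => by ring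
    rw [Finset.prod_congr rfl this, Finset.prod_mul_distrib, Finset.prod_const,
      Nat.card_Ioc]
    congr 2
    omega
  have hC : 0 ≤ ∏ j ∈ Finset.Ioc (k - 1) (n - 1), ((j : ℝ) - (k : ℝ) - p) := by
    refine Finset.prod_nonneg fun j hj => ?_
    rw [Finset.mem_Ioc] at hj
    have : k ≤ j := by omega
    have : (k : ℝ) ≤ (j : ℝ) := by exact_mod_cast this
    linarith
  have hxe : (0 : ℝ) < x ^ ((k : ℝ) + p - (n : ℝ)) := Real.rpow_pos_of_pos hx _
  have hpow : (-1 : ℝ) ^ (n + k) * (-1 : ℝ) ^ (n - k) = 1 := by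
    rw [← pow_add, show n + k + (n - k) = 2 * n by omega, pow_mul]
    norm_num
  have hsign : (-1 : ℝ) ^ (n + k) * p * P * x ^ ((k : ℝ) + p - (n : ℝ)) ≤ 0 := by
    rw [hsplit, hBC]
    have hrw : (-1 : ℝ) ^ (n + k) * p *
        ((∏ j ∈ Finset.Ioc 0 (k - 1), ((k : ℝ) + p - (j : ℝ))) *
          ((-1 : ℝ) ^ (n - k) * ∏ j ∈ Finset.Ioc (k - 1) (n - 1), ((j : ℝ) - (k : ℝ) - p))) *
        x ^ ((k : ℝ) + p - (n : ℝ))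
        = ((-1 : ℝ) ^ (n + k) * (-1 : ℝ) ^ (n - k)) *
          (p * (((∏ j ∈ Finset.Ioc 0 (k - 1), ((k : ℝ) + p - (j : ℝ))) *
            ∏ j ∈ Finset.Ioc (k - 1) (n - 1), ((j : ℝ) - (k : ℝ) - p)) *
            x ^ ((k : ℝ) + p - (n : ℝ)))) := by ring
    rw [hrw, hpow, one_mul]
    exact mul_nonpos_of_nonpos_of_nonneg hp0.le
      (mul_nonneg (mul_nonneg hA hC) hxe.le)
  have heq : iteratedDeriv (n - 1)
      (fun y : ℝ => y ^ k * deriv (fun z : ℝ => z ^ p) y) x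
      = p * P * x ^ ((k : ℝ) + p - (n : ℝ)) := by
    have hev : (fun y : ℝ => y ^ k * deriv (fun z : ℝ => z ^ p) y) =ᶠ[nhds x]
        (fun y : ℝ => p * y ^ ((k : ℝ) + p - 1)) := by
      filter_upwards [eventually_gt_nhds hx] with y hy
      rw [Real.deriv_rpow_const y p, ← Real.rpow_natCast y k,
        mul_left_comm, ← Real.rpow_add hy]
      ring_nf
    rw [hev.iteratedDeriv_eq, iter_rpow_aux (n - 1) p ((k : ℝ) + p - 1) x hx]
    have hprod : (∏ i ∈ Finset.range (n - 1), ((k : ℝ) + p - 1 - (i : ℝ))) = P := by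
      rw [hP, show Finset.Icc 1 (n - 1) = Finset.Ico 1 n by
          rw [show n = (n - 1) + 1 by omega, Finset.Ico_add_one_right_eq_Icc]; congr 1,
        Finset.prod_Ico_eq_prod_range]
      refine Finset.prod_congr rfl fun i _ => ?_
      push_cast
      ring
    have hexp : (k : ℝ) + p - 1 - ((n - 1 : ℕ) : ℝ) = (k : ℝ) + p - (n : ℝ) := by
      rw [Nat.cast_sub (by omega)]
      push_cast; ring
    rw [hprod, hexp, mul_assoc]
  constructor
  · rw [heq, ← mul_assoc, ← mul_assoc]
    exact hsign
  · exact hsign
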